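/- Let B be a conjunction of literals over C. Then B is singular for D(C,Ω) if and only if there exists ω* ∈ Ω such that in every sufficient cause representation (A, 𝔅) for D(C;Ω): (i) for every conjunction of literals B* with domain all of C (|B*| = |C|) extending B, there exists a pair (A_i, B_i) in the representation with B* extending B_i and A_i(ω*) = 1; and (ii) for every pair (A_i, B_i) in the representation such that B_i does not extend B, A_i(ω*) = 0. -/

import Mathlib

/-- An assignment of values to the binary causes indexed by `ι`. -/
abbrev Assign (ι : Type*) := ι → Bool

/-- A conjunction of literals over `ι`: a partial assignment, where `B i = some v`
means the literal at coordinate `i` has target value `v`, and `B i = none` means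
`i` is not in the domain of the conjunction. -/
abbrev Conj (ι : Type*) := ι → Option Bool

/-- An assignment `c` satisfies a conjunction of literals `B`. -/
def Satisfies {ι : Type*} (c : Assign ι) (B : Conj ι) : Prop :=
  ∀ i v, B i = some v → c i = v

/-- `B'` extends `B` : the domain of `B'` contains that of `B` and they agree there. -/
def ConjExtends {ι : Type*} (B B' : Conj ι) : Prop :=
  ∀ i v, B i = some v → B' i = some v

/-- `(A, 𝔅)` is a sufficient cause representation for the family of potential
outcomes `D`. -/
def IsRepresentation {ι Ω : Type*} (D : Ω → Assign ι → Bool)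
    {p : ℕ} (A : Fin p → Ω → Bool) (𝔅 : Fin p → Conj ι) : Prop :=
  ∀ (ω : Ω) (c : Assign ι),
    D ω c = true ↔ ∃ j, A j ω = true ∧ Satisfies c (𝔅 j)

/-- `B` is irreducible for `D(C, Ω)`: every sufficient cause representation
contains some conjunction extending `B`. -/
def IrreducibleConj {ι Ω : Type*} (D : Ω → Assign ι → Bool) (B : Conj ι) : Prop :=
  ∀ (p : ℕ) (A : Fin p → Ω → Bool) (𝔅 : Fin p → Conj ι),
    IsRepresentation D A 𝔅 → ∃ j, ConjExtends B (𝔅 j)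

/-- `B` is a sufficient cause for `D` for the individual `ω`. -/
def SuffCauseFor {ι Ω : Type*} (D : Ω → Assign ι → Bool) (B : Conj ι) (ω : Ω) : Prop :=
  ∀ c : Assign ι, Satisfies c B → D ω c = true

/-- `B` is a minimal sufficient cause for `D` for `ω`: it is a sufficient cause,
but no restriction of `B` to a proper subset of its domain is. -/
def MinSuffCauseFor {ι Ω : Type*} (D : Ω → Assign ι → Bool) (B : Conj ι) (ω : Ω) : Prop :=
  SuffCauseFor D B ω ∧
    ∀ B' : Conj ι, ConjExtends B' B → B' ≠ B → ¬ SuffCauseFor D B' ω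

/-- `B` is a singular (minimal sufficient) cause for `ω`: it is the unique minimal
sufficient cause for `ω`. -/
def SingularFor {ι Ω : Type*} (D : Ω → Assign ι → Bool) (B : Conj ι) (ω : Ω) : Prop :=
  MinSuffCauseFor D B ω ∧ ∀ B' : Conj ι, B' ≠ B → ¬ MinSuffCauseFor D B' ω

/-- `B` is singular for `D(C, Ω)`: it is singular for some individual. -/
def Singular {ι Ω : Type*} (D : Ω → Assign ι → Bool) (B : Conj ι) : Prop :=
  ∃ ω : Ω, SingularFor D B ω

/-- The literal at coordinate `i` with target value `v` has a positive monotonic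
effect on `D` relative to `C`. -/
def PosMonotone {ι Ω : Type*} [DecidableEq ι] (D : Ω → Assign ι → Bool)
    (i : ι) (v : Bool) : Prop :=
  ∀ (ω : Ω) (c : Assign ι),
    D ω (Function.update c i (!v)) = true → D ω (Function.update c i v) = true

/-- `T` is a tree on the finite vertex set `V`: a set of unordered pairs of
distinct elements of `V` with `|T| = |V| - 1` such that any two vertices of `V`
are connected by a path of edges of `T`. -/
def IsTreeOn {ι : Type*} (V : Finset ι) (T : Finset (Sym2 ι)) : Prop :=
  (∀ e ∈ T, ¬ e.IsDiag ∧ ∀ i ∈ e, i ∈ V) ∧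
  T.card = V.card - 1 ∧
  (∀ x ∈ V, ∀ y ∈ V, Relation.ReflTransGen (fun a b => s(a, b) ∈ T) x y)


-- auxiliary lemmas

lemma conjExtends_trans {ι : Type*} {B1 B2 B3 : Conj ι} (h12 : ConjExtends B1 B2)
    (h23 : ConjExtends B2 B3) : ConjExtends B1 B3 := fun i v h => h23 i v (h12 i v h)

/-- A proper restriction has a strictly smaller domain. -/
lemma dom_lt {ι : Type*} [Fintype ι] {B' S : Conj ι} (hext : ConjExtends B' S)
    (hne : B' ≠ S) :
    (Finset.univ.filter (fun i => (B' i).isSome = true)).card <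
      (Finset.univ.filter (fun i => (S i).isSome = true)).card := by
  apply Finset.card_lt_card
  constructor
  · intro i hi
    simp only [Finset.mem_filter, Finset.mem_univ, true_and] at hi ⊢
    obtain ⟨v, hv⟩ := Option.isSome_iff_exists.mp hi
    rw [hext i v hv]; rfl
  · intro hsub
    apply hne
    funext i
    cases hBi : B' i with
    | some v => exact (hext i v hBi).symm
    | none =>
      cases hSi : S i with
      | none => rfl
      | some v =>
        exfalso
        have : i ∈ Finset.univ.filter (fun i => (S i).isSome = true) := by
          simp [hSi]
        have := hsub this
        simp [hBi] at this

/-- Every sufficient cause contains a minimal sufficient cause. -/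
lemma exists_min_restriction {ι Ω : Type*} [Fintype ι] (D : Ω → Assign ι → Bool)
    (ω : Ω) :
    ∀ (n : ℕ) (S : Conj ι),
      (Finset.univ.filter (fun i => (S i).isSome = true)).card ≤ n →
      SuffCauseFor D S ω → ∃ B', ConjExtends B' S ∧ MinSuffCauseFor D B' ω := by
  intro n
  induction n with
  | zero =>
    intro S hcard hsuff
    refine ⟨S, fun i v h => h, hsuff, ?_⟩
    intro B' hext hne _
    have := dom_lt hext hne
    omega
  | succ n ih =>
    intro S hcard hsuff
    by_cases hmin : ∀ B' : Conj ι, ConjExtends B' S → B' ≠ S → ¬ SuffCauseFor D B' ω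
    · exact ⟨S, fun i v h => h, hsuff, hmin⟩
    · push_neg at hmin
      obtain ⟨B'', hext, hne, hsuff''⟩ := hmin
      have hlt := dom_lt hext hne
      obtain ⟨B', hext', hmin'⟩ := ih B'' (by omega) hsuff''
      exact ⟨B', conjExtends_trans hext' hext, hmin'⟩


/-- Theorem 5.2: characterization of singularity in terms of
sufficient cause representations. -/
theorem singular_iff_representation {ι Ω : Type*} [Fintype ι] [Nonempty ι] [Nonempty Ω]
    (D : Ω → Assign ι → Bool) (B : Conj ι) :
    Singular D B ↔
      ∃ ω : Ω, ∀ (p : ℕ) (A : Fin p → Ω → Bool) (𝔅 : Fin p → Conj ι),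
        IsRepresentation D A 𝔅 →
          (∀ b' : ι → Bool, ConjExtends B (fun i => some (b' i)) →
            ∃ j, ConjExtends (𝔅 j) (fun i => some (b' i)) ∧ A j ω = true) ∧
          (∀ j, ¬ ConjExtends B (𝔅 j) → A j ω = false) := by
  
  constructor
  · -- forward direction
    rintro ⟨ω, hsing⟩
    refine ⟨ω, fun p A 𝔅 hrep => ⟨?_, ?_⟩⟩
    · intro b' hext
      have hsat : Satisfies b' B := by
        intro i v h
        have := hext i v h
        exact Option.some_injective _ this
      have hD : D ω b' = true := hsing.1.1 b' hsat
      obtain ⟨j, hA, hs⟩ := (hrep ω b').mp hD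
      refine ⟨j, ?_, hA⟩
      intro i v h
      exact congrArg some (hs i v h)
    · intro j hnext
      by_contra hA
      have hA' : A j ω = true := by
        cases h : A j ω
        · exact absurd h hA
        · rfl
      -- 𝔅 j is sufficient for ω
      have hsuff : SuffCauseFor D (𝔅 j) ω := by
        intro c hc
        exact (hrep ω c).mpr ⟨j, hA', hc⟩
      obtain ⟨B', hext', hmin'⟩ := exists_min_restriction D ω _ (𝔅 j) le_rfl hsuff
      have hBeq : B' = B := by
        by_contra hne
        exact hsing.2 B' hne hmin'
      exact hnext (hBeq ▸ hext')
  · -- backward direction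
    rintro ⟨ω, H⟩
    -- the canonical "full" representation
    classical
    set p := Fintype.card (Assign ι) with hp
    let e : Assign ι ≃ Fin p := Fintype.equivFin (Assign ι)
    let A : Fin p → Ω → Bool := fun j ω' => D ω' (e.symm j)
    let 𝔅 : Fin p → Conj ι := fun j i => some (e.symm j i)
    have hrep : IsRepresentation D A 𝔅 := by
      intro ω' c
      constructor
      · intro hD
        refine ⟨e c, ?_, ?_⟩
        · show D ω' (e.symm (e c)) = true
          rwa [e.symm_apply_apply]
        · intro i v h
          have : e.symm (e c) i = v := Option.some_injective _ h
          rwa [e.symm_apply_apply] at this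
      · rintro ⟨j, hA, hs⟩
        have : c = e.symm j := funext fun i => hs i _ rfl
        rw [this]; exact hA
    obtain ⟨h1, h2⟩ := H p A 𝔅 hrep
    -- key: D ω c = true ↔ Satisfies c B
    have key : ∀ c : Assign ι, D ω c = true ↔ Satisfies c B := by
      intro c
      constructor
      · intro hD
        by_contra hns
        have hnext : ¬ ConjExtends B (𝔅 (e c)) := by
          intro hext
          apply hns
          intro i v h
          have := hext i v h
          simp only [𝔅, e.symm_apply_apply] at this
          exact Option.some_injective _ this
        have := h2 (e c) hnext
        simp only [A, e.symm_apply_apply] at this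
        rw [this] at hD
        exact absurd hD (by simp)
      · intro hs
        have hext : ConjExtends B (fun i => some (c i)) := by
          intro i v h
          exact congrArg some (hs i v h)
        obtain ⟨j, hj, hA⟩ := h1 c hext
        have : e.symm j = c := by
          funext i
          have := hj i (e.symm j i) rfl
          exact (Option.some_injective _ this).symm
        simp only [A] at hA
        rwa [this] at hA
    -- B is a sufficient cause for ω
    have hBsuff : SuffCauseFor D B ω := fun c hc => (key c).mpr hc
    refine ⟨ω, ⟨hBsuff, ?_⟩, ?_⟩
    · -- minimality
      intro B' hext hne hsuff'
      -- find i with B' i = none, B i = some v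
      have : ∃ i v, B' i = none ∧ B i = some v := by
        by_contra hcon
        push_neg at hcon
        apply hne
        funext i
        cases hB'i : B' i with
        | some v => exact (hext i v hB'i).symm
        | none =>
          cases hBi : B i with
          | none => rfl
          | some v => exact absurd hBi (hcon i v hB'i)
      obtain ⟨i, v, hB'i, hBi⟩ := this
      -- construct c satisfying B' but not B
      let c : Assign ι := fun j => if j = i then !v else (B j).getD false
      have hcsat : Satisfies c B' := by
        intro j w hw
        have hj : j ≠ i := by
          intro h; rw [h, hB'i] at hw; exact Option.some_ne_none w hw.symm
        have hBj : B j = some w := hext j w hw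
        simp [c, hj, hBj]
      have hD := hsuff' c hcsat
      have := (key c).mp hD i v hBi
      simp [c] at this
    · -- uniqueness
      intro B'' hne hmin''
      -- B'' sufficient → every c satisfying B'' satisfies B
      have hforce : ∀ c, Satisfies c B'' → Satisfies c B :=
        fun c hc => (key c).mp (hmin''.1 c hc)
      -- show B'' extends B
      have hext : ConjExtends B B'' := by
        intro i v hBi
        by_contra hB''i
        let c : Assign ι := fun j => if j = i then (B'' i).getD (!v) else (B'' j).getD false
        have hcsat : Satisfies c B'' := by
          intro j w hw
          by_cases hj : j = i
          · subst hj; simp [c, hw]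
          · simp [c, hj, hw]
        have hci := hforce c hcsat i v hBi
        simp only [c, if_pos rfl] at hci
        cases hB''iv : B'' i with
        | none => rw [hB''iv] at hci; simp at hci
        | some w =>
          rw [hB''iv] at hci
          simp at hci
          rw [hB''iv, hci] at hB''i
          exact hB''i rfl
      -- B is a proper restriction of B'', contradicting minimality of B''
      exact hmin''.2 B hext (Ne.symm hne) hBsuff
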